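/- Let d ≥ 1 and N ≥ 2 be integers, let k > 0 be a real number with k² < N, let S be a d×d symmetric positive definite matrix, and let w ∈ ℝ^d. Set v := (N/(N+1))·w, M := ((N−1)/(N+1))·S + (1/N)·v vᵀ, and q_N := wᵀ S^{-1} w. Then vᵀ M^{-1} v ≥ k² if and only if q_N ≥ (N² − 1)k² / ( N(N − k²) ). -/

import Mathlib

open Matrix

lemma vecMulVec_mulVec' {d : ℕ} (v x : Fin d → ℝ) :
    vecMulVec v v *ᵥ x = (v ⬝ᵥ x) • v := by
  funext i
  simp [vecMulVec_apply, mulVec, dotProduct, Finset.sum_mul, Finset.mul_sum, mul_comm,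
    mul_assoc, mul_left_comm]

lemma vecMulVec_posSemidef {d : ℕ} (v : Fin d → ℝ) : (vecMulVec v v).PosSemidef := by
  rw [posSemidef_iff_dotProduct_mulVec]
  constructor
  · ext i j
    simp [vecMulVec_apply, mul_comm]
  · intro x
    have hx : star x = x := by simp
    rw [hx, vecMulVec_mulVec', dotProduct_smul, smul_eq_mul, dotProduct_comm x v]
    exact mul_self_nonneg _

lemma posSemidef_smul {d : ℕ} {A : Matrix (Fin d) (Fin d) ℝ} (hA : A.PosSemidef) {c : ℝ}
    (hc : 0 ≤ c) : (c • A).PosSemidef := by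
  rw [posSemidef_iff_dotProduct_mulVec]
  constructor
  · have h := hA.isHermitian
    ext i j
    simp only [conjTranspose_apply, Matrix.smul_apply, star_trivial]
    rw [← h.apply i j, star_trivial]
  · intro x
    rw [smul_mulVec, dotProduct_smul, smul_eq_mul]
    exact mul_nonneg hc (hA.dotProduct_mulVec_nonneg x)

lemma posDef_smul {d : ℕ} {A : Matrix (Fin d) (Fin d) ℝ} (hA : A.PosDef) {c : ℝ}
    (hc : 0 < c) : (c • A).PosDef := by
  rw [posDef_iff_dotProduct_mulVec]
  constructor
  · have h := hA.isHermitian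
    ext i j
    simp only [conjTranspose_apply, Matrix.smul_apply, star_trivial]
    rw [← h.apply i j, star_trivial]
  · intro x hx
    rw [smul_mulVec, dotProduct_smul, smul_eq_mul]
    exact mul_pos hc (hA.dotProduct_mulVec_pos hx)

/-- With `v := (N/(N+1))·w`, `M := ((N−1)/(N+1))·S + (1/N)·v vᵀ`
and `q_N := wᵀ S⁻¹ w`, for `0 < k` with `k² < N` one has
`vᵀ M⁻¹ v ≥ k²` iff `q_N ≥ (N²−1)k² / (N(N−k²))`. -/
theorem normalized_event_equivalence (d N : ℕ) (hd : 1 ≤ d) (hN : 2 ≤ N)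
    (k : ℝ) (hk : 0 < k) (hk2 : k ^ 2 < N)
    (S : Matrix (Fin d) (Fin d) ℝ) (hS : S.PosDef) (w : Fin d → ℝ)
    (v : Fin d → ℝ) (hv : v = ((N : ℝ) / ((N : ℝ) + 1)) • w)
    (M : Matrix (Fin d) (Fin d) ℝ)
    (hM : M = (((N : ℝ) - 1) / ((N : ℝ) + 1)) • S + (N : ℝ)⁻¹ • vecMulVec v v)
    (qN : ℝ) (hqN : qN = w ⬝ᵥ (S⁻¹ *ᵥ w)) :
    k ^ 2 ≤ v ⬝ᵥ (M⁻¹ *ᵥ v)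
      ↔ ((N : ℝ) ^ 2 - 1) * k ^ 2 / ((N : ℝ) * ((N : ℝ) - k ^ 2)) ≤ qN := by
  have hn : (2:ℝ) ≤ (N:ℝ) := by exact_mod_cast hN
  set n : ℝ := (N:ℝ) with hn_def
  have hn0 : 0 < n := by linarith
  have hn1 : 0 < n + 1 := by linarith
  have hnm1 : 0 < n - 1 := by linarith
  have hnk : 0 < n - k ^ 2 := by linarith
  have hc : 0 < (n - 1) / (n + 1) := div_pos hnm1 hn1
  -- qN nonneg
  have hq0 : 0 ≤ qN := by
    have := hS.inv.posSemidef.dotProduct_mulVec_nonneg w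
    simpa [hqN] using this
  -- t := v ⬝ᵥ S⁻¹ *ᵥ v
  set t : ℝ := v ⬝ᵥ (S⁻¹ *ᵥ v) with ht_def
  have ht : t = (n / (n+1))^2 * qN := by
    rw [ht_def, hv, hqN, mulVec_smul, dotProduct_smul, smul_dotProduct,
      smul_eq_mul, smul_eq_mul]
    ring
  have ht0 : 0 ≤ t := by
    rw [ht]
    positivity
  -- M positive definite
  have hMpd : M.PosDef := by
    rw [hM]
    exact (posDef_smul hS hc).add_posSemidef
      (posSemidef_smul (vecMulVec_posSemidef v) (by positivity : (0:ℝ) ≤ (n:ℝ)⁻¹))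
  -- key: M *ᵥ (S⁻¹ *ᵥ v) = α • v
  set α : ℝ := (n - 1) / (n + 1) + t / n with hα_def
  have hα : 0 < α := by
    have h1 : 0 ≤ t / n := div_nonneg ht0 hn0.le
    rw [hα_def]
    linarith
  have hSdet : IsUnit S.det := hS.det_pos.ne'.isUnit
  have key : M *ᵥ (S⁻¹ *ᵥ v) = α • v := by
    rw [hM, add_mulVec, smul_mulVec, smul_mulVec, mulVec_mulVec,
      mul_nonsing_inv _ hSdet, one_mulVec, vecMulVec_mulVec', ← ht_def, hα_def]
    funext i
    simp [mul_comm, div_eq_mul_inv]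
    ring
  have hinv : M⁻¹ *ᵥ v = α⁻¹ • (S⁻¹ *ᵥ v) := by
    have h2 : M *ᵥ (α⁻¹ • (S⁻¹ *ᵥ v)) = v := by
      rw [mulVec_smul, key, smul_smul, inv_mul_cancel₀ hα.ne', one_smul]
    calc M⁻¹ *ᵥ v = M⁻¹ *ᵥ (M *ᵥ (α⁻¹ • (S⁻¹ *ᵥ v))) := by rw [h2]
      _ = α⁻¹ • (S⁻¹ *ᵥ v) := by
          rw [mulVec_mulVec, nonsing_inv_mul _ hMpd.det_pos.ne'.isUnit, one_mulVec]
  have hval : v ⬝ᵥ (M⁻¹ *ᵥ v) = t / α := by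
    rw [hinv, dotProduct_smul, ← ht_def, smul_eq_mul, div_eq_inv_mul]
  rw [hval, le_div_iff₀ hα, div_le_iff₀ (mul_pos hn0 hnk)]
  have hP : (0:ℝ) < (n+1)^2 := by positivity
  have h1 : (n+1) ≠ 0 := hn1.ne'
  have ht' : t * (n+1)^2 = n^2 * qN := by rw [ht]; field_simp
  have hα' : α * (n+1)^2 = (n-1)*(n+1) + n*qN := by
    rw [hα_def, ht]; field_simp
  constructor
  · intro h
    have h' := mul_le_mul_of_nonneg_right h hP.le
    rw [mul_assoc, hα', ht'] at h'
    nlinarith [h']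
  · intro h
    have h' : k^2 * α * (n+1)^2 ≤ t * (n+1)^2 := by
      rw [mul_assoc, hα', ht']; nlinarith [h]
    exact le_of_mul_le_mul_right h' hP
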